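/- arXiv:2105.08225 — 2 statements merged into one kernel-verified Lean document; each statement's English description precedes it below -/
import Mathlib

section
/- For r ≥ 2, the r-dynamic chromatic number of the cycle C_p equals 5 if p = 5, equals 3 if p ≡ 0 (mod 3) and p ≠ 5, and equals 4 otherwise. -/
open SimpleGraph

/-- Lexicographic product of simple graphs. -/
def SimpleGraph.lexProd {α β : Type*} (G₁ : SimpleGraph α) (G₂ : SimpleGraph β) :
    SimpleGraph (α × β) where
  Adj x y := G₁.Adj x.1 y.1 ∨ (x.1 = y.1 ∧ G₂.Adj x.2 y.2)
  symm := by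
    refine ⟨?_⟩
    rintro x y (h | ⟨h1, h2⟩)
    · exact Or.inl h.symm
    · exact Or.inr ⟨h1.symm, h2.symm⟩
  loopless := by
    refine ⟨?_⟩
    rintro x (h | ⟨-, h⟩)
    · exact G₁.irrefl h
    · exact G₂.irrefl h

/-- `c` is a proper coloring such that each vertex `v` sees at least
`min r (deg v)` distinct colors among its neighbors. -/
def SimpleGraph.IsRDynamicColoring {α : Type*} (G : SimpleGraph α) (r : ℕ) (c : α → ℕ) : Prop :=
  (∀ u v, G.Adj u v → c u ≠ c v) ∧
  ∀ v, min r (G.neighborSet v).ncard ≤ (c '' G.neighborSet v).ncard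

/-- The `r`-dynamic chromatic number: least `k` such that there is an
`r`-dynamic coloring with colors in `{0, …, k-1}`. -/
noncomputable def SimpleGraph.rDynChromaticNumber {α : Type*} (G : SimpleGraph α) (r : ℕ) : ℕ :=
  sInf {k | ∃ c : α → ℕ, G.IsRDynamicColoring r c ∧ ∀ v, c v < k}

/-- Maximum degree (via `Set.ncard` of neighbor sets). -/
noncomputable def SimpleGraph.maxDeg {α : Type*} (G : SimpleGraph α) : ℕ :=
  sSup (Set.range fun v => (G.neighborSet v).ncard)

/-- Minimum degree (via `Set.ncard` of neighbor sets). -/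
noncomputable def SimpleGraph.minDeg {α : Type*} (G : SimpleGraph α) : ℕ :=
  sInf (Set.range fun v => (G.neighborSet v).ncard)

/-- The star `K_{1,m}`: center `0` adjacent to the `m` leaves. -/
def starGraph (m : ℕ) : SimpleGraph (Fin (m + 1)) :=
  SimpleGraph.fromRel (fun i _ => i = 0)

/-- The double star `K_{1,m,m}`: center `0`, middle vertices `1,…,m`,
outer leaf `i + m` attached to middle vertex `i`. -/
def doubleStarGraph (m : ℕ) : SimpleGraph (Fin (2 * m + 1)) :=
  SimpleGraph.fromRel (fun i j =>
    ((i : ℕ) = 0 ∧ 1 ≤ (j : ℕ) ∧ (j : ℕ) ≤ m) ∨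
    (1 ≤ (i : ℕ) ∧ (i : ℕ) ≤ m ∧ (j : ℕ) = (i : ℕ) + m))

/-- The triple star `K_{1,m,m,m}`: center `0`, middle vertices `1,…,m`,
vertex `i + m` attached to `i` for `1 ≤ i ≤ 2m`. -/
def tripleStarGraph (m : ℕ) : SimpleGraph (Fin (3 * m + 1)) :=
  SimpleGraph.fromRel (fun i j =>
    ((i : ℕ) = 0 ∧ 1 ≤ (j : ℕ) ∧ (j : ℕ) ≤ m) ∨
    (1 ≤ (i : ℕ) ∧ (i : ℕ) ≤ 2 * m ∧ (j : ℕ) = (i : ℕ) + m))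


namespace CycleAux

open scoped Fin.CommRing Fin.NatCast

lemma two_val (m : ℕ) (hm : 1 ≤ m) : (2 : Fin (m+2)).val = 2 := by
  simp only [OfNat.ofNat, Fin.ofNat_eq_cast, Fin.val_natCast]
  exact Nat.mod_eq_of_lt (by omega)

lemma val_add_one (m : ℕ) (v : Fin (m+2)) : (v+1).val = (v.val + 1) % (m+2) := by
  rw [Fin.add_def, Fin.val_one]

lemma val_add_two (m : ℕ) (hm : 1 ≤ m) (v : Fin (m+2)) :
    (v+2).val = (v.val + 2) % (m+2) := by
  rw [Fin.add_def, two_val m hm]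

lemma sub_ne (m : ℕ) (hm : 1 ≤ m) (v : Fin (m+2)) : v - 1 ≠ v + 1 := by
  intro h'
  have h2 : (v+1) - (v-1) = 2 := by ring
  rw [← h', sub_self] at h2
  have := congrArg Fin.val h2
  rw [Fin.val_zero, two_val m hm] at this
  omega

lemma ne_add_two (m : ℕ) (hm : 1 ≤ m) (v : Fin (m+2)) : v ≠ v + 2 := by
  intro h'
  have h2 : (v+2) - v = 2 := by ring
  rw [← h', sub_self] at h2
  have := congrArg Fin.val h2
  rw [Fin.val_zero, two_val m hm] at this
  omega

lemma cycle_iff (m r : ℕ) (hm : 1 ≤ m) (hr : 2 ≤ r) (c : Fin (m+2) → ℕ) :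
    (cycleGraph (m+2)).IsRDynamicColoring r c ↔
      (∀ v, c v ≠ c (v+1)) ∧ (∀ v, c v ≠ c (v+2)) := by
  constructor
  · rintro ⟨hp, hd⟩
    constructor
    · intro v
      exact hp v (v+1) (by rw [cycleGraph_adj]; right; ring)
    · intro v hceq
      have h := hd (v+1)
      rw [cycleGraph_neighborSet] at h
      rw [show (v+1) - 1 = v from by ring, show (v+1) + 1 = v + 2 from by ring] at h
      rw [Set.image_insert_eq, Set.image_singleton, ← hceq] at h
      rw [Set.ncard_pair (ne_add_two m hm v)] at h
      simp at h
      omega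
  · rintro ⟨h1, h2⟩
    constructor
    · intro u v huv
      rw [cycleGraph_adj] at huv
      rcases huv with h | h
      · have : u = v + 1 := by rw [← h]; ring
        subst this; exact (h1 v).symm
      · have : v = u + 1 := by rw [← h]; ring
        subst this; exact h1 u
    · intro v
      rw [cycleGraph_neighborSet]
      have hne2 : c (v-1) ≠ c (v+1) := by
        have := h2 (v-1); rwa [show (v-1) + 2 = v + 1 from by ring] at this
      rw [Set.image_insert_eq, Set.image_singleton, Set.ncard_pair hne2,
        Set.ncard_pair (sub_ne m hm v)]
      omega

lemma lb3 (m k : ℕ) (c : Fin (m+2) → ℕ)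
    (h1 : ∀ v, c v ≠ c (v+1)) (h2 : ∀ v, c v ≠ c (v+2)) (hk : ∀ v, c v < k) : 3 ≤ k := by
  have a := h1 0; have b := h2 0; have d := h1 1
  rw [zero_add] at a b
  rw [show (1:Fin (m+2))+1 = 2 from one_add_one_eq_two] at d
  have := hk 0; have := hk 1; have := hk 2
  omega

lemma step3 (m : ℕ) (c : Fin (m+2) → ℕ)
    (h1 : ∀ v, c v ≠ c (v+1)) (h2 : ∀ v, c v ≠ c (v+2)) (hc : ∀ v, c v < 3)
    (v : Fin (m+2)) : c (v+3) = c v := by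
  have q1 := h1 v; have q2 := h2 v
  have q3 := h1 (v+1); have q4 := h2 (v+1); have q5 := h1 (v+2)
  rw [show (v+1)+1 = v+2 from by ring] at q3
  rw [show (v+1)+2 = v+3 from by ring] at q4
  rw [show (v+2)+1 = v+3 from by ring] at q5
  have := hc v; have := hc (v+1); have := hc (v+2); have := hc (v+3)
  omega

lemma lb4 (m k : ℕ) (hm : 1 ≤ m) (hmod : (m+2) % 3 ≠ 0) (c : Fin (m+2) → ℕ)
    (h1 : ∀ v, c v ≠ c (v+1)) (h2 : ∀ v, c v ≠ c (v+2)) (hk : ∀ v, c v < k) : 4 ≤ k := by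
  by_contra hlt
  push_neg at hlt
  have hc3 : ∀ v, c v < 3 := fun v => by have := hk v; have h0 := lb3 m k c h1 h2 hk; omega
  have iter : ∀ (n : ℕ) (v : Fin (m+2)), c (v + (3*n : ℕ)) = c v := by
    intro n
    induction n with
    | zero => intro v; simp
    | succ n ih =>
      intro v
      have hcst : ((3*(n+1) : ℕ) : Fin (m+2)) = ((3*n : ℕ) : Fin (m+2)) + 3 := by
        push_cast; ring
      rw [hcst, ← add_assoc, step3 m c h1 h2 hc3, ih]
  obtain ⟨n, hn⟩ : ∃ n : ℕ, ((3*n : ℕ) : Fin (m+2)) = 1 := by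
    have hcase : (m+2) % 3 = 1 ∨ (m+2) % 3 = 2 := by omega
    rcases hcase with h | h
    · refine ⟨(2*(m+2)+1)/3, ?_⟩
      have h3n : 3 * ((2*(m+2)+1)/3) = 2*(m+2)+1 := by omega
      rw [Fin.ext_iff, Fin.val_natCast, Fin.val_one, h3n,
        show 2*(m+2)+1 = 1+(m+2)*2 from by ring, Nat.add_mul_mod_self_left]
      exact Nat.mod_eq_of_lt (by omega)
    · refine ⟨((m+2)+1)/3, ?_⟩
      have h3n : 3 * (((m+2)+1)/3) = (m+2)+1 := by omega
      rw [Fin.ext_iff, Fin.val_natCast, Fin.val_one, h3n,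
        show (m+2)+1 = 1+(m+2)*1 from by ring, Nat.add_mul_mod_self_left]
      exact Nat.mod_eq_of_lt (by omega)
  have := iter n 0
  rw [hn, zero_add] at this
  have h0 := h1 0
  rw [zero_add] at h0
  exact h0 this.symm

lemma lb5 (k : ℕ) (c : Fin 5 → ℕ)
    (h1 : ∀ v, c v ≠ c (v+1)) (h2 : ∀ v, c v ≠ c (v+2)) (hk : ∀ v, c v < k) : 5 ≤ k := by
  have a0 := h1 0; have a1 := h1 1; have a2 := h1 2; have a3 := h1 3; have a4 := h1 4
  have b0 := h2 0; have b1 := h2 1; have b2 := h2 2; have b3 := h2 3; have b4 := h2 4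
  rw [show (0:Fin 5)+1 = 1 from by decide] at a0
  rw [show (1:Fin 5)+1 = 2 from by decide] at a1
  rw [show (2:Fin 5)+1 = 3 from by decide] at a2
  rw [show (3:Fin 5)+1 = 4 from by decide] at a3
  rw [show (4:Fin 5)+1 = 0 from by decide] at a4
  rw [show (0:Fin 5)+2 = 2 from by decide] at b0
  rw [show (1:Fin 5)+2 = 3 from by decide] at b1
  rw [show (2:Fin 5)+2 = 4 from by decide] at b2
  rw [show (3:Fin 5)+2 = 0 from by decide] at b3
  rw [show (4:Fin 5)+2 = 1 from by decide] at b4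
  have := hk 0; have := hk 1; have := hk 2; have := hk 3; have := hk 4
  omega

lemma wrap (a j n : ℕ) (ha : a < n) (hj : j ≤ n) :
    (a+j) % n = a + j ∨ (a+j) % n + n = a + j := by
  rcases Nat.lt_or_ge (a+j) n with h | h
  · exact Or.inl (Nat.mod_eq_of_lt h)
  · right
    rw [Nat.mod_eq_sub_mod h, Nat.mod_eq_of_lt (by omega)]
    omega

lemma ub3 (m : ℕ) (hm : 1 ≤ m) (hmod : (m+2) % 3 = 0) :
    ∃ c : Fin (m+2) → ℕ, (∀ v, c v ≠ c (v+1)) ∧ (∀ v, c v ≠ c (v+2)) ∧ ∀ v, c v < 3 := by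
  refine ⟨fun v => v.val % 3, fun v => ?_, fun v => ?_,
    fun v => by show v.val % 3 < 3; omega⟩
  · show v.val % 3 ≠ (v+1).val % 3
    rw [val_add_one]
    have := wrap v.val 1 (m+2) v.isLt (by omega)
    omega
  · show v.val % 3 ≠ (v+2).val % 3
    rw [val_add_two m hm]
    have := wrap v.val 2 (m+2) v.isLt (by omega)
    omega

lemma ub4 (m t q : ℕ) (hm : 1 ≤ m) (ht : t = 1 ∨ t = 2) (hq : m + 2 = q + 4*t)
    (hq3 : q % 3 = 0) :
    ∃ c : Fin (m+2) → ℕ, (∀ v, c v ≠ c (v+1)) ∧ (∀ v, c v ≠ c (v+2)) ∧ ∀ v, c v < 4 := by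
  refine ⟨fun v => if v.val < q then v.val % 3 else (v.val - q) % 4,
    fun v => ?_, fun v => ?_,
    fun v => by show (if v.val < q then v.val % 3 else (v.val - q) % 4) < 4;
                split_ifs <;> omega⟩
  · show (if v.val < q then v.val % 3 else (v.val - q) % 4) ≠
      (if (v+1).val < q then (v+1).val % 3 else ((v+1).val - q) % 4)
    rw [val_add_one]
    have h1 := wrap v.val 1 (m+2) v.isLt (by omega)
    have h2 := v.isLt
    rcases ht with rfl | rfl <;> split_ifs <;> omega
  · show (if v.val < q then v.val % 3 else (v.val - q) % 4) ≠
      (if (v+2).val < q then (v+2).val % 3 else ((v+2).val - q) % 4)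
    rw [val_add_two m hm]
    have h1 := wrap v.val 2 (m+2) v.isLt (by omega)
    have h2 := v.isLt
    rcases ht with rfl | rfl <;> split_ifs <;> omega

lemma ub5 : ∃ c : Fin 5 → ℕ, (∀ v, c v ≠ c (v+1)) ∧ (∀ v, c v ≠ c (v+2)) ∧ ∀ v, c v < 5 :=
  ⟨fun v => v.val, by decide, by decide, fun v => v.isLt⟩

end CycleAux

theorem stmt_3 (r p : ℕ) (hr : 2 ≤ r) (hp : 3 ≤ p) :
    (SimpleGraph.cycleGraph p).rDynChromaticNumber r =
      if p = 5 then 5 else if p % 3 = 0 then 3 else 4 := by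
  obtain ⟨m, rfl⟩ : ∃ m, p = m + 2 := ⟨p-2, by omega⟩
  have hm : 1 ≤ m := by omega
  unfold SimpleGraph.rDynChromaticNumber
  have hS : ∀ k : ℕ,
      (∃ c : Fin (m+2) → ℕ, (cycleGraph (m+2)).IsRDynamicColoring r c ∧ ∀ v, c v < k) ↔
      (∃ c : Fin (m+2) → ℕ, (∀ v, c v ≠ c (v+1)) ∧ (∀ v, c v ≠ c (v+2)) ∧ ∀ v, c v < k) := by
    intro k
    constructor
    · rintro ⟨c, hc, hb⟩
      obtain ⟨u1, u2⟩ := (CycleAux.cycle_iff m r hm hr c).mp hc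
      exact ⟨c, u1, u2, hb⟩
    · rintro ⟨c, u1, u2, hb⟩
      exact ⟨c, (CycleAux.cycle_iff m r hm hr c).mpr ⟨u1, u2⟩, hb⟩
  by_cases h5 : m + 2 = 5
  · rw [if_pos h5]
    have hm3 : m = 3 := by omega
    subst hm3
    obtain ⟨c, u1, u2, ub⟩ := CycleAux.ub5
    apply le_antisymm
    · exact Nat.sInf_le ((hS 5).mpr ⟨c, u1, u2, ub⟩)
    · refine le_csInf ⟨5, (hS 5).mpr ⟨c, u1, u2, ub⟩⟩ ?_
      intro k hk
      obtain ⟨c', v1, v2, vb⟩ := (hS k).mp hk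
      exact CycleAux.lb5 k c' v1 v2 vb
  · rw [if_neg h5]
    by_cases h3 : (m+2) % 3 = 0
    · rw [if_pos h3]
      obtain ⟨c, u1, u2, ub⟩ := CycleAux.ub3 m hm h3
      apply le_antisymm
      · exact Nat.sInf_le ((hS 3).mpr ⟨c, u1, u2, ub⟩)
      · refine le_csInf ⟨3, (hS 3).mpr ⟨c, u1, u2, ub⟩⟩ ?_
        intro k hk
        obtain ⟨c', v1, v2, vb⟩ := (hS k).mp hk
        exact CycleAux.lb3 m k c' v1 v2 vb
    · rw [if_neg h3]
      obtain ⟨t, q, ht, hq, hq3⟩ : ∃ t q, (t = 1 ∨ t = 2) ∧ m + 2 = q + 4*t ∧ q % 3 = 0 := by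
        rcases (show (m+2) % 3 = 1 ∨ (m+2) % 3 = 2 by omega) with h | h
        · exact ⟨1, m+2-4, Or.inl rfl, by omega, by omega⟩
        · exact ⟨2, m+2-8, Or.inr rfl, by omega, by omega⟩
      obtain ⟨c, u1, u2, ub⟩ := CycleAux.ub4 m t q hm ht hq hq3
      apply le_antisymm
      · exact Nat.sInf_le ((hS 4).mpr ⟨c, u1, u2, ub⟩)
      · refine le_csInf ⟨4, (hS 4).mpr ⟨c, u1, u2, ub⟩⟩ ?_
        intro k hk
        obtain ⟨c', v1, v2, vb⟩ := (hS k).mp hk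
        exact CycleAux.lb4 m k hm h3 c' v1 v2 vb
end

section
/- For integers l ≥ 2 and m ≥ 3, and every r with 1 ≤ r ≤ 3, the r-dynamic chromatic number of the lexicographic product P_l[K_{1,m,m}] of the path on l vertices with the double star equals 4. -/
open SimpleGraph

/-- Auxiliary coloring for the lexicographic product. -/
def myCol (l m : ℕ) : Fin l × Fin (2 * m + 1) → ℕ := fun p =>
  2 * (p.1.val % 2) + (if 1 ≤ p.2.val ∧ p.2.val ≤ m then 1 else 0)

theorem stmt_11 (l m r : ℕ) (hl : 2 ≤ l) (hm : 3 ≤ m) (hr1 : 1 ≤ r) (hr3 : r ≤ 3) :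
    ((SimpleGraph.pathGraph l).lexProd (doubleStarGraph m)).rDynChromaticNumber r = 4 := by
  set G := (SimpleGraph.pathGraph l).lexProd (doubleStarGraph m) with hG
  have hproper : ∀ u v, G.Adj u v → myCol l m u ≠ myCol l m v := by
    rintro u v (h | ⟨h1, h2⟩) hcc
    · rw [SimpleGraph.pathGraph_adj] at h
      unfold myCol at hcc
      split_ifs at hcc <;> omega
    · rw [doubleStarGraph, SimpleGraph.fromRel_adj] at h2
      unfold myCol at hcc
      rw [h1] at hcc
      obtain ⟨hne, hrel | hrel⟩ := h2 <;> (split_ifs at hcc <;> omega)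
  have hcolbd : ∀ p, myCol l m p < 4 := by
    intro p
    unfold myCol
    have := Nat.mod_lt p.1.val (show 0 < 2 by norm_num)
    split_ifs <;> omega
  have hdyn : ∀ v : Fin l × Fin (2 * m + 1), 3 ≤ (myCol l m '' G.neighborSet v).ncard := by
    rintro ⟨i, j⟩
    have hil := i.isLt
    have hjl := j.isLt
    obtain ⟨i', hpa, hpar⟩ : ∃ i' : Fin l,
        (SimpleGraph.pathGraph l).Adj i i' ∧ i.val % 2 ≠ i'.val % 2 := by
      by_cases h : i.val + 1 < l
      · refine ⟨⟨i.val + 1, h⟩, ?_, ?_⟩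
        · rw [SimpleGraph.pathGraph_adj]; exact Or.inl rfl
        · show i.val % 2 ≠ (i.val + 1) % 2; omega
      · refine ⟨⟨i.val - 1, by omega⟩, ?_, ?_⟩
        · rw [SimpleGraph.pathGraph_adj]
          right
          show (i.val - 1) + 1 = i.val
          omega
        · show i.val % 2 ≠ (i.val - 1) % 2; omega
    obtain ⟨w, hda⟩ : ∃ w : Fin (2 * m + 1), (doubleStarGraph m).Adj j w := by
      by_cases h0 : j.val = 0
      · refine ⟨⟨1, by omega⟩, ?_⟩
        rw [doubleStarGraph, SimpleGraph.fromRel_adj]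
        exact ⟨Fin.ne_of_val_ne (show (j : ℕ) ≠ 1 by omega),
          Or.inl (Or.inl ⟨h0, le_refl 1, show (1:ℕ) ≤ m by omega⟩)⟩
      · by_cases h1 : j.val ≤ m
        · refine ⟨⟨0, by omega⟩, ?_⟩
          rw [doubleStarGraph, SimpleGraph.fromRel_adj]
          exact ⟨Fin.ne_of_val_ne (show (j : ℕ) ≠ 0 from h0),
            Or.inr (Or.inl ⟨rfl, by omega, h1⟩)⟩
        · refine ⟨⟨j.val - m, by omega⟩, ?_⟩
          rw [doubleStarGraph, SimpleGraph.fromRel_adj]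
          exact ⟨Fin.ne_of_val_ne (show (j : ℕ) ≠ j.val - m by omega),
            Or.inr (Or.inr ⟨show 1 ≤ j.val - m by omega, show j.val - m ≤ m by omega,
              show (j : ℕ) = (j.val - m) + m by omega⟩)⟩
    have hm1 : ((i', ⟨0, by omega⟩) : Fin l × Fin (2 * m + 1)) ∈ G.neighborSet (i, j) :=
      Or.inl hpa
    have hm2 : ((i', ⟨1, by omega⟩) : Fin l × Fin (2 * m + 1)) ∈ G.neighborSet (i, j) :=
      Or.inl hpa
    have hm3 : ((i, w) : Fin l × Fin (2 * m + 1)) ∈ G.neighborSet (i, j) :=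
      Or.inr ⟨rfl, hda⟩
    have hc1 : myCol l m (i', ⟨0, by omega⟩) = 2 * (i'.val % 2) := by
      show 2 * (i'.val % 2) + (if 1 ≤ 0 ∧ 0 ≤ m then 1 else 0) = _
      rw [if_neg (by omega)]
      omega
    have hc2 : myCol l m (i', ⟨1, by omega⟩) = 2 * (i'.val % 2) + 1 := by
      show 2 * (i'.val % 2) + (if 1 ≤ 1 ∧ 1 ≤ m then 1 else 0) = _
      rw [if_pos ⟨le_refl 1, by omega⟩]
    have hc3 : 2 * (i.val % 2) ≤ myCol l m (i, w) ∧ myCol l m (i, w) ≤ 2 * (i.val % 2) + 1 := by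
      show 2 * (i.val % 2) ≤ 2 * (i.val % 2) + (if 1 ≤ w.val ∧ w.val ≤ m then 1 else 0) ∧
        2 * (i.val % 2) + (if 1 ≤ w.val ∧ w.val ≤ m then 1 else 0) ≤ 2 * (i.val % 2) + 1
      split_ifs <;> omega
    have hmod : i.val % 2 < 2 ∧ i'.val % 2 < 2 :=
      ⟨Nat.mod_lt _ (by omega), Nat.mod_lt _ (by omega)⟩
    have d12 : myCol l m (i', ⟨0, by omega⟩) ≠ myCol l m (i', ⟨1, by omega⟩) := by
      rw [hc1, hc2]; omega
    have d13 : myCol l m (i', ⟨0, by omega⟩) ≠ myCol l m (i, w) := by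
      rw [hc1]; omega
    have d23 : myCol l m (i', ⟨1, by omega⟩) ≠ myCol l m (i, w) := by
      rw [hc2]; omega
    have hsub : ({myCol l m (i', ⟨0, by omega⟩), myCol l m (i', ⟨1, by omega⟩),
        myCol l m (i, w)} : Set ℕ) ⊆ myCol l m '' G.neighborSet (i, j) := by
      rintro x hx
      simp only [Set.mem_insert_iff, Set.mem_singleton_iff] at hx
      rcases hx with rfl | rfl | rfl
      · exact ⟨_, hm1, rfl⟩
      · exact ⟨_, hm2, rfl⟩
      · exact ⟨_, hm3, rfl⟩
    have h3 : ({myCol l m (i', ⟨0, by omega⟩), myCol l m (i', ⟨1, by omega⟩),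
        myCol l m (i, w)} : Set ℕ).ncard = 3 :=
      Set.ncard_eq_three.mpr ⟨_, _, _, d12, d13, d23, rfl⟩
    calc 3 = ({myCol l m (i', ⟨0, by omega⟩), myCol l m (i', ⟨1, by omega⟩),
          myCol l m (i, w)} : Set ℕ).ncard := h3.symm
      _ ≤ _ := Set.ncard_le_ncard hsub (Set.toFinite _)
  have hdc : G.IsRDynamicColoring r (myCol l m) :=
    ⟨hproper, fun v => le_trans (le_trans (min_le_left _ _) hr3) (hdyn v)⟩
  have hmem : 4 ∈ {k | ∃ c : Fin l × Fin (2 * m + 1) → ℕ,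
      G.IsRDynamicColoring r c ∧ ∀ v, c v < k} := ⟨myCol l m, hdc, hcolbd⟩
  rw [SimpleGraph.rDynChromaticNumber]
  refine le_antisymm (Nat.sInf_le hmem) (le_csInf ⟨4, hmem⟩ ?_)
  rintro k ⟨c', ⟨hp, -⟩, hb⟩
  have hds : (doubleStarGraph m).Adj ⟨0, by omega⟩ ⟨1, by omega⟩ := by
    rw [doubleStarGraph, SimpleGraph.fromRel_adj]
    exact ⟨Fin.ne_of_val_ne (show (0 : ℕ) ≠ 1 by omega),
      Or.inl (Or.inl ⟨rfl, le_refl 1, show (1:ℕ) ≤ m by omega⟩)⟩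
  have hpa01 : (SimpleGraph.pathGraph l).Adj ⟨0, by omega⟩ ⟨1, by omega⟩ := by
    rw [SimpleGraph.pathGraph_adj]; exact Or.inl rfl
  set a : Fin l × Fin (2 * m + 1) := (⟨0, by omega⟩, ⟨0, by omega⟩) with ha
  set b : Fin l × Fin (2 * m + 1) := (⟨0, by omega⟩, ⟨1, by omega⟩) with hbv
  set d : Fin l × Fin (2 * m + 1) := (⟨1, by omega⟩, ⟨0, by omega⟩) with hd
  set e : Fin l × Fin (2 * m + 1) := (⟨1, by omega⟩, ⟨1, by omega⟩) with he
  have hab := hp a b (Or.inr ⟨rfl, hds⟩)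
  have had := hp a d (Or.inl hpa01)
  have hae := hp a e (Or.inl hpa01)
  have hbd := hp b d (Or.inl hpa01)
  have hbe := hp b e (Or.inl hpa01)
  have hde := hp d e (Or.inr ⟨rfl, hds⟩)
  have h1 := hb a
  have h2 := hb b
  have h3 := hb d
  have h4 := hb e
  omega
end
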